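/- Let h ∈ ℤ[x] with h(0) odd and g ≥ 1. Then the polynomial f(x) = x^(2g+1) + h(x)^2 is squarefree over 𝔽₂ (i.e., its reduction mod 2 is squarefree), and hence f is squarefree over ℚ and its discriminant is odd. -/

import Mathlib

open Polynomial

lemma trace_mk_eq {T : Type*} [CommRing T] {g : T[X]} (hg : g.Monic) (q : T[X]) :
    Algebra.trace T (AdjoinRoot g) (AdjoinRoot.mk g q) =
      ∑ i ∈ Finset.range g.natDegree, ((q * X ^ i) %ₘ g).coeff i := by
  classical
  rw [Algebra.trace_eq_matrix_trace (AdjoinRoot.powerBasis' hg).basis, Matrix.trace,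
    ← Fin.sum_univ_eq_sum_range]
  refine Finset.sum_congr rfl fun i _ => ?_
  rw [Matrix.diag_apply, Algebra.leftMulMatrix_eq_repr_mul]
  have hb : (AdjoinRoot.powerBasis' hg).basis i = AdjoinRoot.root g ^ (i : ℕ) :=
    (AdjoinRoot.powerBasis' hg).basis_eq_pow i
  rw [hb]
  have : AdjoinRoot.mk g q * AdjoinRoot.root g ^ (i : ℕ) = AdjoinRoot.mk g (q * X ^ (i : ℕ)) := by
    rw [map_mul, map_pow, AdjoinRoot.mk_X]
  simp only [AdjoinRoot.powerBasis', AdjoinRoot.powerBasisAux'_repr_apply_to_fun]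
  rw [this]; rfl

lemma trace_mk_map {R S : Type*} [CommRing R] [CommRing S] [Nontrivial S] (φ : R →+* S)
    {f : R[X]} (hf : f.Monic) (q : R[X]) :
    φ (Algebra.trace R (AdjoinRoot f) (AdjoinRoot.mk f q)) =
      Algebra.trace S (AdjoinRoot (f.map φ)) (AdjoinRoot.mk (f.map φ) (q.map φ)) := by
  rw [trace_mk_eq hf, trace_mk_eq (hf.map φ), hf.natDegree_map φ, map_sum]
  refine Finset.sum_congr rfl fun i _ => ?_
  rw [← Polynomial.coeff_map, Polynomial.map_modByMonic _ hf, Polynomial.map_mul,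
    Polynomial.map_pow, Polynomial.map_X]

lemma discr_map {R S : Type*} [CommRing R] [CommRing S] [Nontrivial S] (φ : R →+* S)
    {f : R[X]} (hf : f.Monic) (m : ℕ) :
    φ (Algebra.discr R (fun i : Fin m => AdjoinRoot.root f ^ (i : ℕ))) =
      Algebra.discr S (fun i : Fin m => AdjoinRoot.root (f.map φ) ^ (i : ℕ)) := by
  classical
  rw [Algebra.discr_def, Algebra.discr_def, RingHom.map_det]
  congr 1
  ext i j
  rw [RingHom.mapMatrix_apply, Matrix.map_apply, Algebra.traceMatrix_apply,
    Algebra.traceMatrix_apply, Algebra.traceForm_apply, Algebra.traceForm_apply]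
  have h1 : AdjoinRoot.root f ^ (i : ℕ) * AdjoinRoot.root f ^ (j : ℕ) =
      AdjoinRoot.mk f (X ^ (i : ℕ) * X ^ (j : ℕ)) := by
    rw [map_mul, map_pow, map_pow, AdjoinRoot.mk_X]
  have h2 : AdjoinRoot.root (f.map φ) ^ (i : ℕ) * AdjoinRoot.root (f.map φ) ^ (j : ℕ) =
      AdjoinRoot.mk (f.map φ) ((X ^ (i : ℕ) * X ^ (j : ℕ) : R[X]).map φ) := by
    rw [Polynomial.map_mul, Polynomial.map_pow, Polynomial.map_pow, Polynomial.map_X,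
      map_mul, map_pow, map_pow, AdjoinRoot.mk_X]
  rw [h1, h2, trace_mk_map φ hf]

lemma discr_powers_ne_zero_of_prod {E : Type*} [Field E] {n : ℕ} (hn : 0 < n)
    (r : Fin n → E) (hr : Function.Injective r) {p : E[X]}
    (hp : p = ∏ i, (X - C (r i))) :
    Algebra.discr E (fun i : Fin n => AdjoinRoot.root p ^ (i : ℕ)) ≠ 0 := by
  classical
  have hpm : p.Monic := hp ▸ monic_prod_of_monic _ _ fun i _ => monic_X_sub_C (r i)
  set A := AdjoinRoot p with hA
  let pb := AdjoinRoot.powerBasis' hpm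
  haveI : Module.Finite E A := Module.Finite.of_basis pb.basis
  set q : Fin n → E[X] := fun i => ∏ j ∈ Finset.univ.erase i, (X - C (r j)) with hq
  have hfac : ∀ i, (X - C (r i)) * q i = p := fun i => by
    rw [hp]; simp only [hq]; exact Finset.mul_prod_erase Finset.univ (fun j => X - C (r j)) (Finset.mem_univ i)
  set c : Fin n → E := fun i => (q i).eval (r i) with hcdef
  have hceval : ∀ i j, i ≠ j → (q i).eval (r j) = 0 := by
    intro i j hij
    simp only [hq, eval_prod, eval_sub, eval_X, eval_C]
    exact Finset.prod_eq_zero (Finset.mem_erase.mpr ⟨hij.symm, Finset.mem_univ j⟩) (sub_self _)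
  have hc : ∀ i, c i ≠ 0 := by
    intro i
    rw [hcdef]
    simp only [hq, eval_prod, eval_sub, eval_X, eval_C]
    exact Finset.prod_ne_zero_iff.mpr fun j hj =>
      sub_ne_zero.mpr fun hij => (Finset.mem_erase.mp hj).1 (hr hij.symm)
  set e : Fin n → A := fun i => (c i)⁻¹ • AdjoinRoot.mk p (q i) with he
  have hkey : ∀ (Q : E[X]) (i), AdjoinRoot.mk p Q * e i = Q.eval (r i) • e i := by
    intro Q i
    have hdvd : p ∣ (Q - C (Q.eval (r i))) * q i := by
      obtain ⟨w, hw⟩ := X_sub_C_dvd_sub_C_eval (a := r i) (p := Q)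
      exact ⟨w, by rw [hw, ← hfac i]; ring⟩
    have h0 : AdjoinRoot.mk p ((Q - C (Q.eval (r i))) * q i) = 0 := AdjoinRoot.mk_eq_zero.mpr hdvd
    have h2 : AdjoinRoot.mk p Q * AdjoinRoot.mk p (q i)
        = Q.eval (r i) • AdjoinRoot.mk p (q i) := by
      rw [sub_mul, map_sub, sub_eq_zero] at h0
      rw [← map_mul, h0, AdjoinRoot.smul_mk, Polynomial.smul_eq_C_mul]
    rw [he]
    simp only [mul_smul_comm]
    rw [h2, smul_comm]
  have horth : ∀ i j, i ≠ j → e i * e j = 0 := by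
    intro i j hij
    have hdvd : p ∣ q i * q j := by
      have hmem : j ∈ Finset.univ.erase i := Finset.mem_erase.mpr ⟨hij.symm, Finset.mem_univ j⟩
      obtain ⟨m, hm⟩ : ∃ m, q i = (X - C (r j)) * m := ⟨_, (Finset.mul_prod_erase _ _ hmem).symm⟩
      exact ⟨m, by rw [hm, ← hfac j]; ring⟩
    have h0 : AdjoinRoot.mk p (q i * q j) = 0 := AdjoinRoot.mk_eq_zero.mpr hdvd
    rw [he]
    simp only [smul_mul_smul_comm, ← map_mul, h0, smul_zero]
  have hidem : ∀ i, e i * e i = e i := by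
    intro i
    have h1 := hkey (q i) i
    calc e i * e i = (c i)⁻¹ • (AdjoinRoot.mk p (q i) * e i) := by
          rw [he]; simp only [smul_mul_assoc]
      _ = (c i)⁻¹ • (c i • e i) := by rw [h1, hcdef]
      _ = e i := by rw [smul_smul, inv_mul_cancel₀ (hc i), one_smul]
  have hsumpoly : (∑ i, C (c i)⁻¹ * q i) = 1 := by
    have hz : (∑ i, C (c i)⁻¹ * q i) - 1 = 0 := by
      apply eq_zero_of_natDegree_lt_card_of_eval_eq_zero _ hr
      · intro j
        simp only [eval_sub, eval_finset_sum, eval_mul, eval_C, eval_one]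
        rw [Finset.sum_eq_single j]
        · have hj : eval (r j) (q j) = c j := rfl
          rw [hj, inv_mul_cancel₀ (hc j), sub_self]
        · intro i _ hij
          rw [hceval i j hij, mul_zero]
        · exact fun hj => absurd (Finset.mem_univ j) hj
      · refine lt_of_le_of_lt (natDegree_sub_le _ _) ?_
        rw [Fintype.card_fin]
        refine max_lt (lt_of_le_of_lt (natDegree_sum_le _ _) ?_) (by simpa using hn)
        refine (Finset.fold_max_lt _).mpr ⟨hn, fun i _ => ?_⟩
        simp only [Function.comp]
        refine lt_of_le_of_lt ((natDegree_C_mul_le _ _).trans (natDegree_prod_le _ _)) ?_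
        refine lt_of_le_of_lt
          (Finset.sum_le_card_nsmul _ _ 1 fun j _ => le_of_eq (natDegree_X_sub_C _)) ?_
        simp only [Finset.card_erase_of_mem (Finset.mem_univ i), Finset.card_univ,
          Fintype.card_fin, smul_eq_mul, mul_one]
        omega
    exact sub_eq_zero.mp hz
  have hsum : (∑ i, e i) = 1 := by
    rw [he]
    have : ∀ i : Fin n, (c i)⁻¹ • AdjoinRoot.mk p (q i) = AdjoinRoot.mk p (C (c i)⁻¹ * q i) := by
      intro i
      rw [map_mul, AdjoinRoot.mk_C, ← AdjoinRoot.algebraMap_eq, ← Algebra.smul_def]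
    simp only [this]
    rw [← map_sum, hsumpoly, map_one]
  have hspan : ⊤ ≤ Submodule.span E (Set.range e) := by
    intro z _
    obtain ⟨Q, rfl⟩ := AdjoinRoot.mk_surjective z
    have : AdjoinRoot.mk p Q = ∑ i, Q.eval (r i) • e i := by
      rw [← Finset.sum_congr rfl fun i _ => hkey Q i, ← Finset.mul_sum, hsum, mul_one]
    rw [this]
    exact Submodule.sum_mem _ fun i _ =>
      Submodule.smul_mem _ _ (Submodule.subset_span ⟨i, rfl⟩)
  have hcard : Fintype.card (Fin n) = Module.finrank E A := by
    rw [Fintype.card_fin, pb.finrank, AdjoinRoot.powerBasis'_dim]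
    rw [hp, natDegree_prod _ _ fun i _ => X_sub_C_ne_zero (r i)]
    simp [natDegree_X_sub_C]
  let B : Module.Basis (Fin n) E A := basisOfTopLeSpanOfCardEqFinrank e hspan hcard
  have hB : ⇑B = e := coe_basisOfTopLeSpanOfCardEqFinrank e hspan hcard
  have htr : ∀ i, Algebra.trace E A (e i) = 1 := by
    intro i
    rw [Algebra.trace_eq_matrix_trace B, Matrix.trace]
    rw [Finset.sum_eq_single i]
    · rw [Matrix.diag_apply, Algebra.leftMulMatrix_eq_repr_mul, hB, hidem i, ← hB,
        B.repr_self_apply, if_pos rfl]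
    · intro j _ hji
      rw [Matrix.diag_apply, Algebra.leftMulMatrix_eq_repr_mul, hB, horth i j (Ne.symm hji),
        map_zero, Finsupp.coe_zero, Pi.zero_apply]
    · exact fun hj => absurd (Finset.mem_univ i) hj
  have htm : Algebra.traceMatrix E e = 1 := by
    ext i j
    rw [Algebra.traceMatrix_apply, Algebra.traceForm_apply]
    rcases eq_or_ne i j with rfl | hij
    · rw [hidem i, htr i, Matrix.one_apply_eq]
    · rw [horth i j hij, map_zero, Matrix.one_apply_ne hij]
  have hde : Algebra.discr E e = 1 := by
    rw [Algebra.discr_def, htm, Matrix.det_one]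
  have hvec : (fun i : Fin n => AdjoinRoot.root p ^ (i : ℕ))
      = Matrix.mulVec ((Matrix.vandermonde r).transpose.map (algebraMap E A)) e := by
    funext i
    simp only [Matrix.mulVec, dotProduct, Matrix.map_apply, Matrix.transpose_apply,
      Matrix.vandermonde_apply]
    have : ∀ j : Fin n, algebraMap E A (r j ^ (i : ℕ)) * e j
        = AdjoinRoot.mk p (X ^ (i : ℕ)) * e j := by
      intro j
      rw [hkey (X ^ (i : ℕ)) j, eval_pow, eval_X, Algebra.smul_def]
    rw [Finset.sum_congr rfl fun j _ => this j, ← Finset.mul_sum, hsum, mul_one,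
      map_pow, AdjoinRoot.mk_X]
  rw [hvec, Algebra.discr_of_matrix_mulVec, hde, mul_one, Matrix.det_transpose]
  exact pow_ne_zero 2 (Matrix.det_vandermonde_ne_zero_iff.mpr hr)

lemma squarefree_int_of_map {f : ℤ[X]} (hf : f.Monic)
    (hsq : Squarefree (f.map (Int.castRingHom (ZMod 2)))) : Squarefree f := by
  intro d hd
  have hd2 : d.map (Int.castRingHom (ZMod 2)) * d.map (Int.castRingHom (ZMod 2)) ∣
      f.map (Int.castRingHom (ZMod 2)) := by
    rw [← Polynomial.map_mul]; exact Polynomial.map_dvd _ hd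
  have hu : IsUnit (d.map (Int.castRingHom (ZMod 2))) := hsq _ hd2
  obtain ⟨w, hw⟩ := hd
  have hlc : IsUnit d.leadingCoeff := by
    apply IsUnit.of_mul_eq_one (d.leadingCoeff * w.leadingCoeff)
    have h := hf.leadingCoeff
    rw [hw, leadingCoeff_mul, leadingCoeff_mul] at h
    rw [← mul_assoc]; exact h
  have hlc2 : (Int.castRingHom (ZMod 2)) d.leadingCoeff ≠ 0 := by
    rcases Int.isUnit_iff.mp hlc with h | h <;> rw [h] <;> decide
  have hdeg : d.natDegree = 0 := by
    rw [← Polynomial.natDegree_map_of_leadingCoeff_ne_zero _ hlc2]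
    exact Polynomial.natDegree_eq_zero_of_isUnit hu
  rw [Polynomial.eq_C_of_natDegree_eq_zero hdeg]
  apply Polynomial.isUnit_C.mpr
  have : d.coeff 0 = d.leadingCoeff := by rw [Polynomial.leadingCoeff, hdeg]
  rw [this]; exact hlc

lemma squarefree_rat_of_int {f : ℤ[X]} (hf : f.Monic) (hsq : Squarefree f) :
    Squarefree (f.map (Int.castRingHom ℚ)) := by
  have halg : Int.castRingHom ℚ = algebraMap ℤ ℚ := by ext x; simp
  rw [halg]
  intro d hd
  have hfm0 : f.map (algebraMap ℤ ℚ) ≠ 0 := (hf.map _).ne_zero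
  have hne : d ≠ 0 := by
    rintro rfl
    rw [mul_zero, zero_dvd_iff] at hd
    exact hfm0 hd
  obtain ⟨g', hg'⟩ := IsIntegrallyClosed.eq_map_mul_C_of_dvd (K := ℚ) hf
    ((dvd_mul_right d d).trans hd)
  have hlcu : IsUnit (C d.leadingCoeff) :=
    Polynomial.isUnit_C.mpr (leadingCoeff_ne_zero.mpr hne).isUnit
  have ha : Associated (g'.map (algebraMap ℤ ℚ)) d := by
    obtain ⟨u, hu⟩ := hlcu
    exact ⟨u, by rw [hu]; exact hg'⟩
  have hg'm : g'.Monic := by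
    apply Polynomial.monic_of_injective (f := algebraMap ℤ ℚ) (fun a b hab => by
      exact_mod_cast hab)
    have : g'.map (algebraMap ℤ ℚ) = d * C d.leadingCoeff⁻¹ := by
      apply mul_right_cancel₀ hlcu.ne_zero
      rw [hg', mul_assoc, ← C_mul, inv_mul_cancel₀ (leadingCoeff_ne_zero.mpr hne), C_1, mul_one]
    rw [this]
    exact monic_mul_leadingCoeff_inv hne
  have hdvd2 : (g' * g').map (algebraMap ℤ ℚ) ∣ f.map (algebraMap ℤ ℚ) := by
    rw [Polynomial.map_mul]
    exact (ha.mul_mul ha).dvd.trans hd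
  have hg2 : g' * g' ∣ f := hf.dvd_of_fraction_map_dvd_fraction_map (hg'm.mul hg'm) hdvd2
  have hg'u : IsUnit g' := hsq _ hg2
  rw [← hg']
  exact (hg'u.map (Polynomial.mapRingHom (algebraMap ℤ ℚ))).mul hlcu

theorem stmt_0 (g : ℕ) (hg : 1 ≤ g) (h : Polynomial ℤ)
    (hdeg : h.natDegree ≤ g) (hodd : Odd (h.eval 0))
    (f : Polynomial ℤ) (hf : f = X ^ (2 * g + 1) + h ^ 2) :
    Squarefree (f.map (Int.castRingHom (ZMod 2))) ∧
    Squarefree (f.map (Int.castRingHom ℚ)) ∧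
    Odd (Algebra.discr ℤ (fun i : Fin (2 * g + 1) => AdjoinRoot.root f ^ (i : ℕ))) := by
  classical
  set n := 2 * g + 1 with hn
  set φ := Int.castRingHom (ZMod 2) with hφ
  have h2z : ((2 : ℕ) : ZMod 2) = 0 := by rw [ZMod.natCast_self]
  have h2z' : ((2 : ZMod 2)) = 0 := by exact_mod_cast h2z
  -- degrees
  have hdlt : (h ^ 2).degree < ((n : ℕ) : WithBot ℕ) := by
    have h1 : (h ^ 2).natDegree ≤ 2 * g := by
      rw [Polynomial.natDegree_pow]; omega
    refine lt_of_le_of_lt (Polynomial.natDegree_le_iff_degree_le.mp h1) ?_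
    exact_mod_cast Nat.lt_succ_self (2 * g)
  have hmon : f.Monic := by
    rw [hf]; exact Polynomial.monic_X_pow_add hdlt
  have hfdeg : f.natDegree = n := by
    rw [hf]
    apply Polynomial.natDegree_eq_of_degree_eq_some
    rw [Polynomial.degree_add_eq_left_of_degree_lt, Polynomial.degree_X_pow]
    rw [Polynomial.degree_X_pow]; exact hdlt
  have hfbm : (f.map φ).Monic := hmon.map φ
  have hfbdeg : (f.map φ).natDegree = n := by rw [hmon.natDegree_map, hfdeg]
  -- constant coefficient
  have hoddcast : ∀ m : ℤ, Odd m → φ m = 1 := by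
    intro m hm
    obtain ⟨k, hk⟩ := hm
    rw [hφ]
    show ((m : ℤ) : ZMod 2) = 1
    rw [hk]
    push_cast
    rw [h2z']
    ring
  have hcoeff0 : (f.map φ).coeff 0 = 1 := by
    rw [Polynomial.coeff_map, Polynomial.coeff_zero_eq_eval_zero, hf]
    simp only [eval_add, eval_pow, eval_X]
    rw [zero_pow (by omega : 2 * g + 1 ≠ 0), zero_add]
    exact hoddcast _ hodd.pow
  -- derivative
  have hmap2 : f.map φ = X ^ n + (h.map φ) ^ 2 := by
    rw [hf, Polynomial.map_add, Polynomial.map_pow, Polynomial.map_pow, Polynomial.map_X]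
  have c1 : ((n : ℕ) : ZMod 2) = 1 := by
    rw [hn]; push_cast; rw [h2z']; ring
  have hder : derivative (f.map φ) = X ^ (2 * g) := by
    rw [hmap2, derivative_add, derivative_X_pow, derivative_pow, c1]
    simp only [h2z, h2z', hn, map_zero, C_0, zero_mul, mul_zero, add_zero, map_one, C_1, one_mul]
    norm_num
  -- separability
  have hXdvd : ¬ (X ∣ f.map φ) := by
    intro hdvd
    rw [Polynomial.X_dvd_iff, hcoeff0] at hdvd
    exact one_ne_zero hdvd
  have hcop : IsCoprime (f.map φ) X := (Polynomial.prime_X.coprime_iff_not_dvd.mpr hXdvd).symm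
  have hsep : (f.map φ).Separable := by
    rw [Polynomial.separable_def, hder]
    exact hcop.pow_right
  have hsq1 : Squarefree (f.map φ) := hsep.squarefree
  refine ⟨hsq1, squarefree_rat_of_int hmon (squarefree_int_of_map hmon hsq1), ?_⟩
  -- splitting field
  set E := (f.map φ).SplittingField with hE
  set pE := (f.map φ).map (algebraMap (ZMod 2) E) with hpE
  have hsplits : pE.Splits :=
    SplittingField.splits _
  have hsepE : pE.Separable := hsep.map
  have hnodup : pE.roots.Nodup := nodup_roots hsepE
  have hpEm : pE.Monic := hfbm.map _
  have hpEdeg : pE.natDegree = n := by rw [hfbm.natDegree_map, hfbdeg]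
  have hcardroots : Multiset.card pE.roots = n := by
    rw [← hpEdeg]; exact (splits_iff_card_roots.mp hsplits)
  set t := pE.roots.toFinset with ht
  have htn : t.card = n := by
    rw [ht, Multiset.toFinset_card_of_nodup hnodup, hcardroots]
  set σ := (t.equivFinOfCardEq htn).symm with hσ
  set r : Fin n → E := fun i => ((σ i : t) : E) with hr'
  have hrinj : Function.Injective r := by
    intro a b hab
    exact σ.injective (Subtype.ext hab)
  have hpEprod : pE = ∏ i, (X - C (r i)) := by
    have h1 : ∏ a ∈ t, (X - C a) = (pE.roots.map fun a => X - C a).prod := by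
      rw [Finset.prod_eq_multiset_prod, ht, Multiset.toFinset_val,
        Multiset.dedup_eq_self.mpr hnodup]
    have h2 : ∏ i, (X - C (r i)) = ∏ a ∈ t, (X - C a) := by
      rw [hr']
      rw [← Finset.prod_coe_sort t (fun a => X - C a)]
      exact Equiv.prod_comp σ (fun x : t => X - C (x : E))
    rw [h2, h1]
    exact hsplits.eq_prod_roots_of_monic hpEm
  have hdE := discr_powers_ne_zero_of_prod (by omega : 0 < n) r hrinj hpEprod
  have e1 := discr_map φ hmon n
  have e2 := discr_map (algebraMap (ZMod 2) E) hfbm n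
  have hd2 : Algebra.discr (ZMod 2) (fun i : Fin n => AdjoinRoot.root (f.map φ) ^ (i : ℕ)) ≠ 0 := by
    intro h0
    rw [h0, map_zero] at e2
    exact hdE e2.symm
  have hcast : φ (Algebra.discr ℤ (fun i : Fin n => AdjoinRoot.root f ^ (i : ℕ))) ≠ 0 := by
    rw [e1]; exact hd2
  rw [← Int.not_even_iff_odd]
  intro hev
  apply hcast
  show ((Algebra.discr ℤ (fun i : Fin n => AdjoinRoot.root f ^ (i : ℕ)) : ℤ) : ZMod 2) = 0
  exact (ZMod.intCast_zmod_eq_zero_iff_dvd _ 2).mpr (by exact_mod_cast hev.two_dvd)
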